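/- Let L/L₂ be a quadratic separable extension with nontrivial automorphism σ, and let λ ∈ L satisfy λ + σ(λ) = 1. Then the map j_λ : (u,v) ↦ (u, v - λ·u·σ(u)) is a group isomorphism from H(L,L₂) onto the group H^λ = {(x,y) ∈ L × L : y + σ(y) = 0} with multiplication (x₁,y₁)·(x₂,y₂) = (x₁+x₂, y₁+y₂ - λ·x₁·σ(x₂) + σ(λ·x₁)·x₂). -/
import Mathlib


/-- For a quadratic separable extension `L/L₂` with nontrivial
automorphism `σ` and `λ` of trace `1`, the map `j_λ : (u,v) ↦ (u, v - λ·u·σ u)`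
is a group isomorphism from `H(L,L₂)` onto the group
`H^λ = {(x,y) : y + σ y = 0}` with law
`(x₁,y₁)·(x₂,y₂) = (x₁+x₂, y₁+y₂ - λ x₁ σ x₂ + σ(λ x₁) x₂)`. -/
theorem stmt_1 {L : Type*} [Field L] (σ : L →+* L)
    (hinv : ∀ x, σ (σ x) = x) (hne : σ ≠ RingHom.id L)
    (lam : L) (hlam : lam + σ lam = 1) :
    let H : Set (L × L) := {p | p.2 + σ p.2 = p.1 * σ p.1}
    let mulH : L × L → L × L → L × L :=
      fun p q => (p.1 + q.1, p.2 + q.2 + σ p.1 * q.1)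
    let Hlam : Set (L × L) := {p | p.2 + σ p.2 = 0}
    let mulLam : L × L → L × L → L × L :=
      fun p q => (p.1 + q.1, p.2 + q.2 - lam * p.1 * σ q.1 + σ (lam * p.1) * q.1)
    let j : L × L → L × L := fun p => (p.1, p.2 - lam * p.1 * σ p.1)
    -- H^λ is a group under mulLam:
    (∀ p ∈ Hlam, ∀ q ∈ Hlam, mulLam p q ∈ Hlam) ∧
    ((0, 0) : L × L) ∈ Hlam ∧
    (∀ p ∈ Hlam, mulLam p ((0 : L), (0 : L)) = p ∧ mulLam ((0 : L), (0 : L)) p = p) ∧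
    (∀ p ∈ Hlam, (-p.1, -p.2 - (lam - σ lam) * p.1 * σ p.1) ∈ Hlam ∧
      mulLam p (-p.1, -p.2 - (lam - σ lam) * p.1 * σ p.1) = ((0 : L), (0 : L))) ∧
    (∀ p q r : L × L, mulLam (mulLam p q) r = mulLam p (mulLam q r)) ∧
    -- j_λ is a group isomorphism from H onto H^λ:
    Set.BijOn j H Hlam ∧
    (∀ p ∈ H, ∀ q ∈ H, j (mulH p q) = mulLam (j p) (j q)) := by
  intro H mulH Hlam mulLam j
  refine ⟨?_, ?_, ?_, ?_, ?_, ⟨?_, ?_, ?_⟩, ?_⟩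
  · intro p hp q hq
    simp only [Hlam, mulLam, Set.mem_setOf_eq] at *
    simp only [map_add, map_sub, map_mul, hinv]
    linear_combination hp + hq
  · simp [Hlam]
  · intro p hp
    constructor <;> · simp [mulLam]
  · intro p hp
    simp only [Hlam, mulLam, Set.mem_setOf_eq] at *
    constructor
    · simp only [map_neg, map_sub, map_mul, hinv]
      linear_combination -hp
    · simp only [map_neg, map_sub, map_mul, Prod.mk.injEq]
      constructor <;> ring
  · intro p q r
    simp only [mulLam, map_add, map_mul, Prod.mk.injEq]
    constructor <;> ring
  · intro p hp
    simp only [H, Hlam, j, Set.mem_setOf_eq] at *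
    simp only [map_sub, map_mul, hinv]
    linear_combination hp - p.1 * σ p.1 * hlam
  · intro p _ q _ h
    simp only [j, Prod.mk.injEq] at h
    obtain ⟨h1, h2⟩ := h
    have : p.2 = q.2 := by rw [h1] at h2; linear_combination h2
    exact Prod.ext h1 this
  · intro q hq
    refine ⟨(q.1, q.2 + lam * q.1 * σ q.1), ?_, ?_⟩
    · simp only [H, Hlam, Set.mem_setOf_eq] at *
      simp only [map_add, map_mul, hinv]
      linear_combination hq + q.1 * σ q.1 * hlam
    · simp [j]
  · intro p _ q _
    simp only [j, mulH, mulLam, map_add, map_mul, Prod.mk.injEq]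
    refine ⟨trivial, ?_⟩
    linear_combination -σ p.1 * q.1 * hlam
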